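/- Given three points x_i, x_j, x_k in H^m and positive reals ρ_i, ρ_j, ρ_k with ρ_i⟨x_i,y⟩_H = ρ_j⟨x_j,y⟩_H = ρ_k⟨x_k,y⟩_H and ρ_i cosh d_is = ρ_j cosh d_js where d_is, d_js are hyperbolic distances from x_i, x_j to a point q on the geodesic between them, the identity e^{2φ_i}|e^{-φ_i}x_i - e^{-φ_j}x_j|² = cosh²(d_is)(tanh d_is + tanh d_js)² holds, where the norm is taken with respect to the Lorentzian inner product, φ_i = -ln ρ_i, and ⟨x_i, x_j⟩_H = -cosh(d_is + d_js). -/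

import Mathlib

/-- Lorentzian inner product on `ℝ^{m+1}`. -/
def lorentz (m : ℕ) (x y : Fin (m + 1) → ℝ) : ℝ :=
  (∑ i : Fin m, x i.castSucc * y i.castSucc) - x (Fin.last m) * y (Fin.last m)

/-- The hyperboloid model of `m`-dimensional hyperbolic space. -/
def Hyperboloid (m : ℕ) : Set (Fin (m + 1) → ℝ) :=
  {x | lorentz m x x = -1 ∧ 0 < x (Fin.last m)}

lemma lorentz_comb {m : ℕ} (a b : ℝ) (x y : Fin (m + 1) → ℝ) :
    lorentz m (fun k => a * x k - b * y k) (fun k => a * x k - b * y k)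
      = a ^ 2 * lorentz m x x - 2 * a * b * lorentz m x y + b ^ 2 * lorentz m y y := by
  have h : ∀ k : Fin (m + 1),
      (a * x k - b * y k) * (a * x k - b * y k)
        = a ^ 2 * (x k * x k) - 2 * a * b * (x k * y k) + b ^ 2 * (y k * y k) := by
    intro k; ring
  simp only [lorentz, h, Finset.sum_add_distrib, Finset.sum_sub_distrib, ← Finset.mul_sum]
  ring

/-- The key identity `e^{2φ_i}|e^{-φ_i}x_i - e^{-φ_j}x_j|² = cosh²(d_is)(tanh d_is + tanh d_js)²`
for the Hessian of the Kantorovich functional, where the squared norm is taken with respect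
to the Lorentzian inner product. -/
theorem lorentz_norm_identity {m : ℕ} (xi xj xk y : Fin (m + 1) → ℝ)
    (hxi : xi ∈ Hyperboloid m) (hxj : xj ∈ Hyperboloid m) (hxk : xk ∈ Hyperboloid m)
    (ρi ρj ρk : ℝ) (hρi : 0 < ρi) (hρj : 0 < ρj) (hρk : 0 < ρk)
    (hyij : ρi * lorentz m xi y = ρj * lorentz m xj y)
    (hyjk : ρj * lorentz m xj y = ρk * lorentz m xk y)
    (dis djs : ℝ) (hdis : 0 ≤ dis) (hdjs : 0 ≤ djs)
    (hpow : ρi * Real.cosh dis = ρj * Real.cosh djs)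
    (φi φj : ℝ) (hφi : φi = -Real.log ρi) (hφj : φj = -Real.log ρj)
    (hd : lorentz m xi xj = -Real.cosh (dis + djs)) :
    Real.exp (2 * φi) *
        lorentz m (fun k => Real.exp (-φi) * xi k - Real.exp (-φj) * xj k)
          (fun k => Real.exp (-φi) * xi k - Real.exp (-φj) * xj k) =
      Real.cosh dis ^ 2 * (Real.tanh dis + Real.tanh djs) ^ 2 := by
  have hei : Real.exp (-φi) = ρi := by rw [hφi, neg_neg, Real.exp_log hρi]
  have hej : Real.exp (-φj) = ρj := by rw [hφj, neg_neg, Real.exp_log hρj]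
  have he2 : Real.exp (2 * φi) = 1 / ρi ^ 2 := by
    rw [show 2 * φi = -φi * (-2 : ℝ) by ring, Real.exp_mul, hei]
    rw [show ((-2 : ℝ)) = ((-2 : ℤ) : ℝ) by norm_num, Real.rpow_intCast]
    rw [zpow_neg, one_div, zpow_two, sq]
  rw [hei, hej, lorentz_comb, hxi.1, hxj.1, hd, he2]
  set ci := Real.cosh dis
  set cj := Real.cosh djs
  set si := Real.sinh dis
  set sj := Real.sinh djs
  have hci : 0 < ci := Real.cosh_pos dis
  have hcj : 0 < cj := Real.cosh_pos djs
  have hti : Real.tanh dis = si / ci := Real.tanh_eq_sinh_div_cosh dis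
  have htj : Real.tanh djs = sj / cj := Real.tanh_eq_sinh_div_cosh djs
  have hadd : Real.cosh (dis + djs) = ci * cj + si * sj := Real.cosh_add dis djs
  have hsi : ci ^ 2 - si ^ 2 = 1 := Real.cosh_sq_sub_sinh_sq dis
  have hsj : cj ^ 2 - sj ^ 2 = 1 := Real.cosh_sq_sub_sinh_sq djs
  have hρj' : ρj = ρi * ci / cj := by
    rw [eq_div_iff hcj.ne']
    linarith [hpow]
  rw [hti, htj, hadd, hρj']
  field_simp
  linear_combination (cj ^ 2) * hsi + (ci ^ 2) * hsj
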